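/- Carathéodory convergence of simply connected domains does not depend on the choice of marked point: if (Ω_n, w_n) → (Ω, w) in the Carathéodory sense, w' ∈ Ω, and w'_n ∈ Ω_n with w'_n → w', then (Ω_n, w'_n) → (Ω, w') in the Carathéodory sense. -/
import Mathlib


open MeasureTheory Metric Filter Topology

noncomputable section

/-- Mean value property over balls: the notion of harmonicity used here. -/
def HasMVP (h : ℂ → ℝ) (Ω : Set ℂ) : Prop :=
  ∀ z ∈ Ω, ∀ r : ℝ, 0 < r → closedBall z r ⊆ Ω →
    h z = ⨍ x in ball z r, h x

/-- `μ` is the harmonic measure of the domain `Ω` at the point `w`: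
a probability measure on `∂Ω` reproducing values of bounded harmonic functions
continuous up to the boundary. -/
def IsHarmonicMeasure (Ω : Set ℂ) (w : ℂ) (μ : Measure ℂ) : Prop :=
  IsProbabilityMeasure μ ∧ μ (frontier Ω)ᶜ = 0 ∧
  ∀ h : ℂ → ℝ, ContinuousOn h (closure Ω) → (∃ M, ∀ x, |h x| ≤ M) →
    HasMVP h Ω → h w = ∫ x, h x ∂μ

/-- Carathéodory convergence of pointed domains. -/
def CaratheodoryConv (Ω : ℕ → Set ℂ) (w : ℕ → ℂ) (Ωl : Set ℂ) (wl : ℂ) : Prop :=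
  Tendsto w atTop (nhds wl) ∧
  (∀ K : Set ℂ, IsCompact K → K ⊆ Ωl → ∀ᶠ n in atTop, K ⊆ Ω n) ∧
  (∀ U : Set ℂ, IsOpen U → IsConnected U → wl ∈ U →
    (∃ᶠ n in atTop, U ⊆ Ω n) → U ⊆ Ωl)

/-- `(Ω n, w n)` and `(Ωl, wl)` have arbitrarily good common interior approximations. -/
def CommonInteriorApprox (Ω : ℕ → Set ℂ) (w : ℕ → ℂ) (Ωl : Set ℂ) (wl : ℂ) : Prop :=
  Tendsto w atTop (nhds wl) ∧
  ∀ ε : ℝ, 0 < ε → ∃ N : ℕ, ∃ K : Set ℂ, IsClosed K ∧ IsConnected K ∧ wl ∈ K ∧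
    K ⊆ Ωl ∧ (∀ n, N ≤ n → K ⊆ Ω n) ∧
    ∀ x ∈ frontier K, infDist x (frontier Ωl) < ε ∧
      ∀ n, N ≤ n → infDist x (frontier (Ω n)) < ε

/-- Weak convergence of measures: integrals of bounded continuous functions converge. -/
def WeakConv (μ : ℕ → Measure ℂ) (ν : Measure ℂ) : Prop :=
  ∀ f : BoundedContinuousFunction ℂ ℝ, Tendsto (fun n => ∫ x, f x ∂(μ n)) atTop (nhds (∫ x, f x ∂ν))

/-- Uniform regularity of a sequence of domains, expressed via the families
`μ n z` of harmonic measures of `Ω n` at `z`. -/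
def UniformlyRegular (Ω : ℕ → Set ℂ) (μ : ℕ → ℂ → Measure ℂ) : Prop :=
  ∀ δ : ℝ, 0 < δ → ∃ ε : ℝ, 0 < ε ∧ ∀ n, ∀ z ∈ Ω n,
    infDist z (frontier (Ω n)) < ε → ENNReal.ofReal (1 - δ) < μ n z (ball z δ)

/-- A domain is regular iff the support of its harmonic measure (at any interior
point) is the whole boundary. -/
def IsRegularDomain (Ω : Set ℂ) (ν : ℂ → Measure ℂ) : Prop :=
  ∀ w ∈ Ω, ∀ x ∈ frontier Ω, ∀ r : ℝ, 0 < r → 0 < ν w (ball x r)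

/-- Carathéodory convergence of simply connected domains does not depend on the
choice of marked points. -/
theorem caratheodory_basepoint_indep
    (Ω : ℕ → Set ℂ) (w w' : ℕ → ℂ) (Ωl : Set ℂ) (wl wl' : ℂ)
    (hopen : ∀ n, IsOpen (Ω n)) (hconn : ∀ n, IsConnected (Ω n))
    (hsc : ∀ n, SimplyConnectedSpace (Ω n))
    (hhyp : ∀ n, (Ω n)ᶜ.Nonempty)
    (hw : ∀ n, w n ∈ Ω n) (hw' : ∀ n, w' n ∈ Ω n)
    (hopenl : IsOpen Ωl) (hconnl : IsConnected Ωl)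
    (hscl : SimplyConnectedSpace Ωl)
    (hhypl : Ωlᶜ.Nonempty) (hwl : wl ∈ Ωl) (hwl' : wl' ∈ Ωl)
    (h : CaratheodoryConv Ω w Ωl wl)
    (hlim : Tendsto w' atTop (nhds wl')) :
    CaratheodoryConv Ω w' Ωl wl' := by
  obtain ⟨-, hcomp, hker⟩ := h
  refine ⟨hlim, hcomp, ?_⟩
  intro U hUopen hUconn hwl'U hfreq
  -- connect wl to wl' by a path in Ωl
  have hpc : IsPathConnected Ωl := hopenl.isConnected_iff_isPathConnected.mp hconnl
  obtain ⟨γ, hγ⟩ : JoinedIn Ωl wl wl' := hpc.joinedIn wl hwl wl' hwl'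
  set K : Set ℂ := Set.range γ with hK
  have hKΩ : K ⊆ Ωl := by rintro x ⟨t, rfl⟩; exact hγ t
  have hKcomp : IsCompact K := isCompact_range γ.continuous
  haveI : PathConnectedSpace unitInterval :=
    isPathConnected_iff_pathConnectedSpace.1
      ((convex_Icc (0:ℝ) 1).isPathConnected ⟨0, le_refl 0, zero_le_one⟩)
  have hKpc : IsPathConnected K := isPathConnected_range γ.continuous
  have hwlK : wl ∈ K := ⟨0, γ.source⟩
  have hwl'K : wl' ∈ K := ⟨1, γ.target⟩
  obtain ⟨r, hr, hrsub⟩ := hKcomp.exists_cthickening_subset_open hopenl hKΩ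
  set W : Set ℂ := Metric.thickening r K with hW
  have hKW : K ⊆ W := self_subset_thickening hr K
  have hWΩ : W ⊆ Ωl := (thickening_subset_cthickening r K).trans hrsub
  have hWopen : IsOpen W := isOpen_thickening
  have hWpc : IsPathConnected W := by
    refine ⟨wl, hKW hwlK, ?_⟩
    intro y hy
    obtain ⟨x, hxK, hxy⟩ := mem_thickening_iff.1 hy
    have h1 : JoinedIn W wl x := (hKpc.joinedIn wl hwlK x hxK).mono hKW
    have hball : ball x r ⊆ W := ball_subset_thickening hxK r
    have h2 : JoinedIn W x y := by
      refine (JoinedIn.of_segment_subset ?_).mono hball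
      refine (convex_ball x r).segment_subset (mem_ball_self hr) ?_
      simpa [dist_comm] using hxy
    exact h1.trans h2
  -- the union U ∪ W
  have hmeet : wl' ∈ U ∩ W := ⟨hwl'U, hKW hwl'K⟩
  have hUWconn : IsConnected (U ∪ W) :=
    IsConnected.union ⟨wl', hmeet⟩ hUconn hWpc.isConnected
  have hWev : ∀ᶠ n in atTop, W ⊆ Ω n := by
    filter_upwards [hcomp (cthickening r K) hKcomp.cthickening hrsub] with n hn
    exact (thickening_subset_cthickening r K).trans hn
  have hfreq' : ∃ᶠ n in atTop, U ∪ W ⊆ Ω n := by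
    refine (hfreq.and_eventually hWev).mono ?_
    rintro n ⟨h1, h2⟩
    exact Set.union_subset h1 h2
  have := hker (U ∪ W) (hUopen.union hWopen) hUWconn
    (Set.mem_union_right U (hKW hwlK)) hfreq'
  exact Set.subset_union_left.trans this
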